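/- Let p_1, ..., p_n > 0 and T > 0. Then the integral over the simplex {0 ≤ s_1 < s_2 < ... < s_n ≤ T} of (s_n - s_{n-1})^{p_n - 1} ··· (s_2 - s_1)^{p_2 - 1} s_1^{p_1 - 1} ds_1 ··· ds_n equals T^{p_1 + ... + p_n} ∏_{k=1}^n Γ(p_k) / Γ(p_1 + ... + p_n + 1). -/

import Mathlib

open MeasureTheory Finset intervalIntegral

lemma real_beta (a b : ℝ) (ha : 0 < a) (hb : 0 < b) :
    ∫ x in (0:ℝ)..1, x ^ (a - 1) * (1 - x) ^ (b - 1)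
      = Real.Gamma a * Real.Gamma b / Real.Gamma (a + b) := by
  have key := Complex.Gamma_mul_Gamma_eq_betaIntegral (s := (a:ℂ)) (t := (b:ℂ))
    (by simpa using ha) (by simpa using hb)
  have hcongr : Complex.betaIntegral a b
      = ((∫ x in (0:ℝ)..1, x ^ (a - 1) * (1 - x) ^ (b - 1) : ℝ) : ℂ) := by
    rw [Complex.betaIntegral, ← intervalIntegral.integral_ofReal]
    apply intervalIntegral.integral_congr
    intro x hx
    rw [Set.uIcc_of_le (by norm_num : (0:ℝ) ≤ 1)] at hx
    push_cast
    rw [Complex.ofReal_cpow hx.1, Complex.ofReal_cpow (by linarith [hx.2])]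
    push_cast
    ring
  rw [hcongr] at key
  have h1 : Complex.Gamma a = (Real.Gamma a : ℂ) := Complex.Gamma_ofReal a
  have h2 : Complex.Gamma b = (Real.Gamma b : ℂ) := Complex.Gamma_ofReal b
  have h3 : Complex.Gamma (a + b) = (Real.Gamma (a + b) : ℂ) := by
    rw [← Complex.ofReal_add]; exact Complex.Gamma_ofReal _
  rw [h1, h2, h3] at key
  have hre : Real.Gamma a * Real.Gamma b
      = Real.Gamma (a + b) * ∫ x in (0:ℝ)..1, x ^ (a - 1) * (1 - x) ^ (b - 1) := by
    exact_mod_cast key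
  have hG : Real.Gamma (a + b) ≠ 0 := (Real.Gamma_pos_of_pos (by linarith)).ne'
  field_simp
  linarith [hre]

lemma beta_integrable_aux (a b T : ℝ) (ha : 0 < a) (hT : 0 < T) :
    IntervalIntegrable (fun x => x ^ (a - 1) * (T - x) ^ (b - 1)) volume 0 (T / 2) := by
  apply IntervalIntegrable.mul_continuousOn
  · exact intervalIntegral.intervalIntegrable_rpow' (by linarith)
  · apply ContinuousOn.rpow_const
    · exact (continuous_const.sub continuous_id).continuousOn
    · intro x hx
      rw [Set.uIcc_of_le (by linarith : (0:ℝ) ≤ T / 2)] at hx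
      left
      show T - x ≠ 0
      intro h
      nlinarith [hx.2]

lemma beta_integrable (a b T : ℝ) (ha : 0 < a) (hb : 0 < b) (hT : 0 < T) :
    IntervalIntegrable (fun x => x ^ (a - 1) * (T - x) ^ (b - 1)) volume 0 T := by
  apply (beta_integrable_aux a b T ha hT).trans (b := T / 2)
  have h2 := (beta_integrable_aux b a T hb hT).comp_sub_left T
  have : T - T / 2 = T / 2 := by ring
  rw [this, sub_zero] at h2
  apply h2.symm.congr
  intro x _
  show (T - x) ^ (b - 1) * (T - (T - x)) ^ (a - 1) = x ^ (a - 1) * (T - x) ^ (b - 1)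
  rw [sub_sub_cancel]
  ring

lemma real_beta' (a b T : ℝ) (ha : 0 < a) (hb : 0 < b) (hT : 0 < T) :
    ∫ x in Set.Ioo (0:ℝ) T, x ^ (a - 1) * (T - x) ^ (b - 1)
      = T ^ (a + b - 1) * Real.Gamma a * Real.Gamma b / Real.Gamma (a + b) := by
  rw [← MeasureTheory.integral_Ioc_eq_integral_Ioo,
    ← intervalIntegral.integral_of_le hT.le]
  have := intervalIntegral.smul_integral_comp_mul_left
    (fun x => x ^ (a - 1) * (T - x) ^ (b - 1)) T (a := 0) (b := 1)
  rw [mul_zero, mul_one] at this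
  rw [← this, smul_eq_mul]
  have hcongr : ∫ x in (0:ℝ)..1, (T * x) ^ (a - 1) * (T - T * x) ^ (b - 1)
      = ∫ x in (0:ℝ)..1, (T ^ (a-1) * T ^ (b-1)) * (x ^ (a - 1) * (1 - x) ^ (b - 1)) := by
    apply intervalIntegral.integral_congr
    intro x hx
    rw [Set.uIcc_of_le (by norm_num : (0:ℝ) ≤ 1)] at hx
    have h1 : T - T * x = T * (1 - x) := by ring
    show (T * x) ^ (a - 1) * (T - T * x) ^ (b - 1) = _
    rw [h1, Real.mul_rpow hT.le hx.1, Real.mul_rpow hT.le (by linarith [hx.2])]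
    ring
  rw [hcongr, intervalIntegral.integral_const_mul, real_beta a b ha hb]
  have hTr : T * (T ^ (a - 1) * T ^ (b - 1)) = T ^ (a + b - 1) := by
    rw [← Real.rpow_add hT, mul_comm T, ← Real.rpow_add_one hT.ne']
    congr 1
    ring
  rw [show T * (T ^ (a-1) * T ^ (b-1) * (Real.Gamma a * Real.Gamma b / Real.Gamma (a+b)))
      = T * (T ^ (a-1) * T ^ (b-1)) * (Real.Gamma a * Real.Gamma b / Real.Gamma (a+b)) by ring,
    hTr]
  ring








lemma one_dim_lintegral (a T : ℝ) (ha : 0 < a) (hT : 0 < T) :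
    ∫⁻ x in Set.Ioc (0:ℝ) T, ENNReal.ofReal (x ^ (a - 1)) = ENNReal.ofReal (T ^ a / a) := by
  have hInt : IntegrableOn (fun x : ℝ => x ^ (a - 1)) (Set.Ioc 0 T) volume := by
    rw [← intervalIntegrable_iff_integrableOn_Ioc_of_le hT.le]
    exact intervalIntegral.intervalIntegrable_rpow' (by linarith)
  rw [← ofReal_integral_eq_lintegral_ofReal hInt ?_]
  · congr 1
    rw [← intervalIntegral.integral_of_le hT.le,
      integral_rpow (Or.inl (by linarith : (-1:ℝ) < a - 1))]
    rw [sub_add_cancel, Real.zero_rpow ha.ne']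
    ring_nf
  · filter_upwards [ae_restrict_mem measurableSet_Ioc] with x hx
    exact Real.rpow_nonneg hx.1.le _

lemma dirichlet_set_meas (m : ℕ) (T : ℝ) :
    MeasurableSet {t : Fin m → ℝ | (∀ i, 0 < t i) ∧ ∑ i, t i ≤ T} := by
  have : {t : Fin m → ℝ | (∀ i, 0 < t i) ∧ ∑ i, t i ≤ T}
      = (⋂ i, {t : Fin m → ℝ | 0 < t i}) ∩ {t | ∑ i, t i ≤ T} := by
    ext t; simp [Set.mem_iInter]
  rw [this]
  exact (MeasurableSet.iInter fun i =>
      measurableSet_lt measurable_const (measurable_pi_apply i)).inter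
    (measurableSet_le (Finset.measurable_sum _ fun i _ => measurable_pi_apply i)
      measurable_const)

lemma dirichlet_integrand_meas (m : ℕ) (p : Fin m → ℝ) :
    Measurable (fun t : Fin m → ℝ => ENNReal.ofReal (∏ i, t i ^ (p i - 1))) :=
  ENNReal.measurable_ofReal.comp
    (Finset.measurable_prod _ fun i _ => ((measurable_pi_apply i).pow_const _))

lemma dirichlet_lintegral : ∀ (n : ℕ) (p : Fin (n+1) → ℝ), (∀ i, 0 < p i) → ∀ T : ℝ, 0 < T →
    ∫⁻ t in {t : Fin (n+1) → ℝ | (∀ i, 0 < t i) ∧ ∑ i, t i ≤ T},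
        ENNReal.ofReal (∏ i, t i ^ (p i - 1))
      = ENNReal.ofReal (T ^ (∑ i, p i) * (∏ i, Real.Gamma (p i))
          / Real.Gamma ((∑ i, p i) + 1)) := by
  intro n
  induction n with
  | zero =>
    intro p hp T hT
    have e := MeasurableEquiv.funUnique (Fin 1) ℝ
    have mp := volume_preserving_funUnique (Fin 1) ℝ
    have hset : {t : Fin 1 → ℝ | (∀ i, 0 < t i) ∧ ∑ i, t i ≤ T}
        = (MeasurableEquiv.funUnique (Fin 1) ℝ) ⁻¹' (Set.Ioc 0 T) := by
      ext t
      simp [Fin.forall_fin_one, Fin.sum_univ_one, MeasurableEquiv.funUnique,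
        Set.mem_Ioc, Equiv.funUnique]
    have hfun : (fun t : Fin 1 → ℝ => ENNReal.ofReal (∏ i, t i ^ (p i - 1)))
        = fun t => ENNReal.ofReal ((MeasurableEquiv.funUnique (Fin 1) ℝ t) ^ (p 0 - 1)) := by
      funext t
      simp [Fin.prod_univ_one, MeasurableEquiv.funUnique, Equiv.funUnique]
    rw [hset, hfun]
    erw [mp.setLIntegral_comp_preimage_emb (MeasurableEquiv.measurableEmbedding _)
        (fun x => ENNReal.ofReal (x ^ (p 0 - 1))) (Set.Ioc 0 T),
      one_dim_lintegral (p 0) T (hp 0) hT]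
    congr 1
    rw [Fin.sum_univ_one, Fin.prod_univ_one, Real.Gamma_add_one (hp 0).ne']
    have hΓ : 0 < Real.Gamma (p 0) := Real.Gamma_pos_of_pos (hp 0)
    rw [eq_div_iff (mul_ne_zero (hp 0).ne' hΓ.ne')]
    field_simp [(hp 0).ne']
  | succ n ih =>
    intro p hp T hT
    have hq0 : 0 < ∑ i : Fin (n+1), p i.succ :=
      Finset.sum_pos (fun i _ => hp i.succ) ⟨0, Finset.mem_univ 0⟩
    set q : ℝ := ∑ i : Fin (n+1), p i.succ with hq
    set K : ℝ := (∏ i : Fin (n+1), Real.Gamma (p i.succ)) / Real.Gamma (q + 1) with hK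
    have hΓq : 0 < Real.Gamma (q + 1) := Real.Gamma_pos_of_pos (by linarith)
    have hΓprod : 0 < ∏ i : Fin (n+1), Real.Gamma (p i.succ) :=
      Finset.prod_pos fun i _ => Real.Gamma_pos_of_pos (hp i.succ)
    have hK0 : 0 ≤ K := le_of_lt (div_pos hΓprod hΓq)
    set S := {t : Fin (n+2) → ℝ | (∀ i, 0 < t i) ∧ ∑ i, t i ≤ T} with hS
    set F := fun t : Fin (n+2) → ℝ => ENNReal.ofReal (∏ i, t i ^ (p i - 1)) with hF
    set E := {z : ℝ × (Fin (n+1) → ℝ) |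
      0 < z.1 ∧ (∀ i, 0 < z.2 i) ∧ z.1 + ∑ i, z.2 i ≤ T} with hE
    set G := fun z : ℝ × (Fin (n+1) → ℝ) =>
      ENNReal.ofReal (z.1 ^ (p 0 - 1) * ∏ i, z.2 i ^ (p i.succ - 1)) with hG
    have hSm : MeasurableSet S := dirichlet_set_meas (n+2) T
    have hFm : Measurable F := dirichlet_integrand_meas (n+2) p
    have hEm : MeasurableSet E := by
      have : E = {z : ℝ × (Fin (n+1) → ℝ) | 0 < z.1}
          ∩ ((⋂ i, {z : ℝ × (Fin (n+1) → ℝ) | 0 < z.2 i})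
            ∩ {z : ℝ × (Fin (n+1) → ℝ) | z.1 + ∑ i, z.2 i ≤ T}) := by
        ext z; simp [hE, Set.mem_iInter, and_assoc]
      rw [this]
      exact (measurableSet_lt measurable_const measurable_fst).inter
        ((MeasurableSet.iInter fun i => measurableSet_lt measurable_const
            ((measurable_pi_apply i).comp measurable_snd)).inter
          (measurableSet_le (measurable_fst.add
            (Finset.measurable_sum _ fun i _ =>
              (measurable_pi_apply i).comp measurable_snd)) measurable_const))
    have hGm : Measurable G :=
      ENNReal.measurable_ofReal.comp ((measurable_fst.pow_const _).mul
        (Finset.measurable_prod _ fun i _ =>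
          ((measurable_pi_apply i).comp measurable_snd).pow_const _))
    rw [← lintegral_indicator hSm]
    have mp := (volume_preserving_piFinSuccAbove (fun _ : Fin (n+2) => ℝ) 0).symm
    rw [← mp.lintegral_comp (hFm.indicator hSm)]
    have hfe : ∀ z : ℝ × (Fin (n+1) → ℝ),
        S.indicator F ((MeasurableEquiv.piFinSuccAbove (fun _ : Fin (n+2) => ℝ) 0).symm z)
          = E.indicator G z := by
      rintro ⟨x, y⟩
      have ht : ((MeasurableEquiv.piFinSuccAbove (fun _ : Fin (n+2) => ℝ) 0).symm (x, y))
          = Fin.cons x y := by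
        simp [MeasurableEquiv.piFinSuccAbove_symm_apply, Fin.insertNthEquiv,
          Fin.insertNth_zero]
      rw [ht]
      have hmem : Fin.cons x y ∈ S ↔ (x, y) ∈ E := by
        simp only [hS, hE, Set.mem_setOf_eq, Fin.forall_fin_succ, Fin.sum_univ_succ,
          Fin.cons_zero, Fin.cons_succ]
        tauto
      have hval : F (Fin.cons x y) = G (x, y) := by
        simp only [hF, hG, Fin.prod_univ_succ, Fin.cons_zero, Fin.cons_succ]
      by_cases h : (x, y) ∈ E
      · rw [Set.indicator_of_mem h, Set.indicator_of_mem (hmem.2 h), hval]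
      · rw [Set.indicator_of_notMem h, Set.indicator_of_notMem (fun hc => h (hmem.1 hc))]
    rw [lintegral_congr hfe, Measure.volume_eq_prod, lintegral_prod _ (hGm.indicator hEm).aemeasurable]
    have hinner : ∀ x : ℝ, (∫⁻ y, E.indicator G (x, y))
        = (Set.Ioo 0 T).indicator
            (fun x => ENNReal.ofReal ((x ^ (p 0 - 1) * (T - x) ^ (q + 1 - 1)) * K)) x := by
      intro x
      by_cases hx : 0 < x
      · have heq : (fun y : Fin (n+1) → ℝ => E.indicator G (x, y))
            = fun y => ENNReal.ofReal (x ^ (p 0 - 1)) *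
                ({y : Fin (n+1) → ℝ | (∀ i, 0 < y i) ∧ ∑ i, y i ≤ T - x}).indicator
                  (fun y => ENNReal.ofReal (∏ i, y i ^ (p i.succ - 1))) y := by
          funext y
          by_cases hy : (∀ i, 0 < y i) ∧ ∑ i, y i ≤ T - x
          · rw [Set.indicator_of_mem (show y ∈ {y : Fin (n+1) → ℝ |
                (∀ i, 0 < y i) ∧ ∑ i, y i ≤ T - x} from hy),
              Set.indicator_of_mem (show (x,y) ∈ E from ⟨hx, hy.1, by linarith [hy.2]⟩)]
            exact ENNReal.ofReal_mul (Real.rpow_nonneg hx.le _)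
          · rw [Set.indicator_of_notMem (show y ∉ {y : Fin (n+1) → ℝ |
                (∀ i, 0 < y i) ∧ ∑ i, y i ≤ T - x} from hy), mul_zero,
              Set.indicator_of_notMem]
            intro hc
            exact hy ⟨hc.2.1, by linarith [hc.2.2]⟩
        rw [heq, lintegral_const_mul _
            ((dirichlet_integrand_meas (n+1) (fun i => p i.succ)).indicator
              (dirichlet_set_meas (n+1) (T - x))),
          lintegral_indicator (dirichlet_set_meas (n+1) (T - x))]
        by_cases hxT : x < T
        · rw [ih (fun i => p i.succ) (fun i => hp i.succ) (T - x) (by linarith),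
            Set.indicator_of_mem (Set.mem_Ioo.2 ⟨hx, hxT⟩),
            ← ENNReal.ofReal_mul (Real.rpow_nonneg hx.le _)]
          congr 1
          rw [hK, ← hq, add_sub_cancel_right]
          ring
        · have hempty : {y : Fin (n+1) → ℝ | (∀ i, 0 < y i) ∧ ∑ i, y i ≤ T - x} = ∅ := by
            ext y
            simp only [Set.mem_setOf_eq, Set.mem_empty_iff_false, iff_false, not_and]
            intro hy1 hy2
            have : 0 < ∑ i, y i := Finset.sum_pos (fun i _ => hy1 i) ⟨0, Finset.mem_univ 0⟩
            linarith
          rw [hempty, Measure.restrict_empty, lintegral_zero_measure, mul_zero,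
            Set.indicator_of_notMem (by simp only [Set.mem_Ioo, not_and]; intro; linarith)]
      · have hzero : ∀ y, E.indicator G (x, y) = 0 := fun y =>
          Set.indicator_of_notMem (fun hc => hx hc.1) _
        simp_rw [hzero, lintegral_zero]
        rw [Set.indicator_of_notMem (fun hc => hx hc.1)]
    simp_rw [hinner]
    rw [lintegral_indicator measurableSet_Ioo]
    have hIntK : IntegrableOn (fun x : ℝ => (x ^ (p 0 - 1) * (T - x) ^ (q + 1 - 1)) * K)
        (Set.Ioo 0 T) := by
      apply Integrable.mul_const
      have hbi := beta_integrable (p 0) (q+1) T (hp 0) (by linarith) hT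
      rw [intervalIntegrable_iff_integrableOn_Ioc_of_le hT.le] at hbi
      exact hbi.mono_set Set.Ioo_subset_Ioc_self
    rw [← ofReal_integral_eq_lintegral_ofReal hIntK ?_]
    · rw [MeasureTheory.integral_mul_const, real_beta' (p 0) (q+1) T (hp 0) (by linarith) hT]
      congr 1
      rw [Fin.sum_univ_succ, Fin.prod_univ_succ, hK, ← hq]
      have h2 : p 0 + (q + 1) - 1 = p 0 + q := by ring
      rw [h2]
      have h3 : Real.Gamma (p 0 + q + 1) ≠ 0 :=
        (Real.Gamma_pos_of_pos (by linarith [hp 0])).ne'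
      have h4 : p 0 + (q + 1) = p 0 + q + 1 := by ring
      rw [h4]
      field_simp
    · filter_upwards [ae_restrict_mem measurableSet_Ioo] with x hx
      have h1 : (0:ℝ) ≤ x ^ (p 0 - 1) := Real.rpow_nonneg hx.1.le _
      have h2 : (0:ℝ) ≤ (T - x) ^ (q+1-1) := Real.rpow_nonneg (by linarith [hx.2]) _
      exact mul_nonneg (mul_nonneg h1 h2) hK0


lemma dirichlet_integral (n : ℕ) (p : Fin (n+1) → ℝ) (hp : ∀ i, 0 < p i)
    (T : ℝ) (hT : 0 < T) :
    ∫ t in {t : Fin (n+1) → ℝ | (∀ i, 0 < t i) ∧ ∑ i, t i ≤ T}, ∏ i, t i ^ (p i - 1)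
      = T ^ (∑ i, p i) * (∏ i, Real.Gamma (p i)) / Real.Gamma ((∑ i, p i) + 1) := by
  rw [integral_eq_lintegral_of_nonneg_ae ?_ ?_]
  · rw [dirichlet_lintegral n p hp T hT, ENNReal.toReal_ofReal]
    have h1 : 0 < T ^ (∑ i, p i) := Real.rpow_pos_of_pos hT _
    have h2 : 0 < ∏ i, Real.Gamma (p i) :=
      Finset.prod_pos fun i _ => Real.Gamma_pos_of_pos (hp i)
    have h3 : 0 < Real.Gamma ((∑ i, p i) + 1) := Real.Gamma_pos_of_pos
      (by have : 0 < ∑ i, p i := Finset.sum_pos (fun i _ => hp i) ⟨0, Finset.mem_univ 0⟩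
          linarith)
    positivity
  · filter_upwards [ae_restrict_mem (dirichlet_set_meas (n+1) T)] with t ht
    exact Finset.prod_nonneg fun i _ => Real.rpow_nonneg (ht.1 i).le _
  · exact (Finset.measurable_prod _ fun i _ =>
      (measurable_pi_apply i).pow_const _).aestronglyMeasurable

theorem simplex_integral_eq (n : ℕ) (p : Fin (n + 1) → ℝ) (hp : ∀ i, 0 < p i)
    (T : ℝ) (hT : 0 < T) :
    (∫ s in {s : Fin (n + 1) → ℝ | 0 ≤ s 0 ∧ StrictMono s ∧ s (Fin.last n) ≤ T},
        (s 0) ^ (p 0 - 1) *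
          ∏ i : Fin n, (s i.succ - s i.castSucc) ^ (p i.succ - 1))
      = T ^ (∑ i, p i) * (∏ i, Real.Gamma (p i)) /
          Real.Gamma ((∑ i, p i) + 1) := by
  classical
  set M : Matrix (Fin (n+1)) (Fin (n+1)) ℝ :=
    Matrix.of fun i j => if j ≤ i then 1 else 0 with hM
  have hdet : M.det = 1 := by
    rw [Matrix.det_of_lowerTriangular M ?ht]
    · simp [hM]
    case ht =>
      intro i j hij
      simp only [hM, Matrix.of_apply, ite_eq_right_iff]
      intro h
      exact absurd h (not_le.2 hij)
  set L := Matrix.toLin' M with hL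
  have hLdet : LinearMap.det L = 1 := by rw [hL, LinearMap.det_toLin', hdet]
  have hmap : Measure.map L volume = volume := by
    rw [Real.map_linearMap_volume_pi_eq_smul_volume_pi (by rw [hLdet]; norm_num)]
    simp [hLdet]
  have hmp : MeasurePreserving L volume volume :=
    ⟨L.continuous_of_finiteDimensional.measurable, hmap⟩
  have hemb : MeasurableEmbedding L := by
    have hInv : Invertible M := M.invertibleOfIsUnitDet (by rw [hdet]; exact isUnit_one)
    exact (Matrix.toLinearEquiv' M hInv).toContinuousLinearEquiv.toHomeomorph.measurableEmbedding
  have hLapp : ∀ (t : Fin (n+1) → ℝ) (i : Fin (n+1)),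
      L t i = ∑ j ∈ Finset.univ.filter (· ≤ i), t j := by
    intro t i
    rw [hL, Matrix.toLin'_apply]
    simp only [Matrix.mulVec, dotProduct, hM, Matrix.of_apply, ite_mul, one_mul,
      zero_mul, Finset.sum_filter]
  have h0 : ∀ t : Fin (n+1) → ℝ, L t 0 = t 0 := by
    intro t
    rw [hLapp]
    rw [show Finset.univ.filter (· ≤ (0 : Fin (n+1))) = {0} from by
      ext j; simp [Fin.le_zero_iff]]
    simp
  have hlast : ∀ t : Fin (n+1) → ℝ, L t (Fin.last n) = ∑ j, t j := by
    intro t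
    rw [hLapp]
    rw [show Finset.univ.filter (· ≤ Fin.last n) = Finset.univ from by
      ext j; simp [Fin.le_last]]
  have hdiff : ∀ (t : Fin (n+1) → ℝ) (i : Fin n),
      L t i.succ - L t i.castSucc = t i.succ := by
    intro t i
    rw [hLapp, hLapp]
    have hins : Finset.univ.filter (· ≤ i.succ)
        = insert i.succ (Finset.univ.filter (· ≤ i.castSucc)) := by
      ext j
      simp only [Finset.mem_filter, Finset.mem_univ, true_and, Finset.mem_insert]
      constructor
      · intro h
        rcases eq_or_lt_of_le h with h1 | h1
        · exact Or.inl h1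
        · exact Or.inr (Fin.le_castSucc_iff.2 h1)
      · rintro (rfl | h)
        · exact le_refl _
        · exact (Fin.le_castSucc_iff.1 h).le
    rw [hins, Finset.sum_insert (by
      simp only [Finset.mem_filter, Finset.mem_univ, true_and]
      exact not_le.2 (Fin.castSucc_lt_succ (i := i)))]
    ring
  have hpre : L ⁻¹' {s : Fin (n+1) → ℝ | 0 ≤ s 0 ∧ StrictMono s ∧ s (Fin.last n) ≤ T}
      = {t | 0 ≤ t 0 ∧ (∀ i : Fin n, 0 < t i.succ) ∧ ∑ i, t i ≤ T} := by
    ext t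
    simp only [Set.mem_preimage, Set.mem_setOf_eq, h0, hlast, Fin.strictMono_iff_lt_succ]
    constructor
    · rintro ⟨h1, h2, h3⟩
      refine ⟨h1, fun i => ?_, h3⟩
      have := h2 i
      rw [← hdiff t i]
      linarith
    · rintro ⟨h1, h2, h3⟩
      refine ⟨h1, fun i => ?_, h3⟩
      have := h2 i
      rw [← hdiff t i] at this
      linarith
  rw [← hmp.setIntegral_preimage_emb hemb
    (fun s => (s 0) ^ (p 0 - 1) * ∏ i : Fin n, (s i.succ - s i.castSucc) ^ (p i.succ - 1))
    {s : Fin (n + 1) → ℝ | 0 ≤ s 0 ∧ StrictMono s ∧ s (Fin.last n) ≤ T}, hpre]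
  simp only [h0, hdiff]
  have haeq : {t : Fin (n+1) → ℝ | 0 ≤ t 0 ∧ (∀ i : Fin n, 0 < t i.succ) ∧ ∑ i, t i ≤ T}
      =ᵐ[volume] {t : Fin (n+1) → ℝ | (∀ i, 0 < t i) ∧ ∑ i, t i ≤ T} := by
    rw [MeasureTheory.ae_eq_set]
    constructor
    · refine measure_mono_null (t := {t : Fin (n+1) → ℝ | t 0 = 0}) ?_ ?_
      · rintro t ⟨⟨h1, h2, h3⟩, h4⟩
        simp only [Set.mem_setOf_eq] at h4 ⊢
        by_contra h5
        apply h4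
        refine ⟨fun i => ?_, h3⟩
        rcases Fin.eq_zero_or_eq_succ i with rfl | ⟨j, rfl⟩
        · exact lt_of_le_of_ne h1 (Ne.symm h5)
        · exact h2 j
      · rw [MeasureTheory.volume_pi]
        exact Measure.pi_hyperplane _ 0 0
    · rw [Set.diff_eq_empty.2, measure_empty]
      rintro t ⟨h1, h2⟩
      exact ⟨(h1 0).le, fun i => h1 i.succ, h2⟩
  rw [setIntegral_congr_set haeq]
  rw [show (fun t : Fin (n+1) → ℝ => t 0 ^ (p 0 - 1) * ∏ i : Fin n, t i.succ ^ (p i.succ - 1))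
      = fun t => ∏ i, t i ^ (p i - 1) from funext fun t => (Fin.prod_univ_succ (fun i => t i ^ (p i - 1))).symm]
  exact dirichlet_integral n p hp T hT
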